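/- arXiv:2111.13140 — 2 statements merged into one kernel-verified Lean document; each statement's English description precedes it below -/
import Mathlib

section
/- Let d ≥ 1, let (ξ_n)_{n≥1} be ℝ^d-valued random variables, and let (a_n)_{n≥1} be positive reals with a_n → ∞. Suppose that ξ_n / a_n converges in distribution to an ℝ^d-valued random vector Z whose law is absolutely continuous with respect to Lebesgue measure. Then for every L > 0, lim_{n→∞} sup_{x ∈ ℝ^d} P(ξ_n ∈ x + [−L/2, L/2]^d) = 0. -/
open MeasureTheory Filter Topology
open scoped ENNReal NNReal

def mcube {d : ℕ} (x : Fin d → ℝ) (r : ℝ) : Set (Fin d → ℝ) :=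
  Set.pi Set.univ fun i => Set.Icc (x i - r) (x i + r)

lemma mem_mcube {d : ℕ} {x v : Fin d → ℝ} {r : ℝ} :
    v ∈ mcube x r ↔ ∀ i, |v i - x i| ≤ r := by
  simp only [mcube, Set.mem_pi, Set.mem_univ, forall_true_left, Set.mem_Icc, abs_le]
  constructor <;> intro h i <;> have := h i <;> exact ⟨by linarith, by linarith⟩

lemma mcube_closed {d : ℕ} (x : Fin d → ℝ) (r : ℝ) : IsClosed (mcube x r) :=
  isClosed_set_pi fun i _ => isClosed_Icc

lemma mcube_meas {d : ℕ} (x : Fin d → ℝ) (r : ℝ) : MeasurableSet (mcube x r) :=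
  (mcube_closed x r).measurableSet

lemma mcube_volume {d : ℕ} (x : Fin d → ℝ) (r : ℝ) :
    volume (mcube x r) = (ENNReal.ofReal (2*r))^d := by
  rw [mcube, volume_pi_pi]
  have : ∀ i : Fin d, volume (Set.Icc (x i - r) (x i + r)) = ENNReal.ofReal (2*r) := by
    intro _; rw [Real.volume_Icc]; ring_nf
  simp [this]

lemma small_cubes {d : ℕ} (hd : 1 ≤ d) (μ : Measure (Fin d → ℝ)) [IsProbabilityMeasure μ]
    (habs : μ ≪ volume) {ε : ℝ≥0∞} (hε : 0 < ε) :
    ∃ δ : ℝ, 0 < δ ∧ ∀ x, μ (mcube x δ) ≤ ε := by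
  classical
  set f := μ.rnDeriv volume with hfdef
  have hf : Measurable f := Measure.measurable_rnDeriv μ volume
  have hdens : volume.withDensity f = μ := Measure.withDensity_rnDeriv_eq μ volume habs
  have hint : ∫⁻ v, f v ∂volume = 1 := by
    rw [Measure.lintegral_rnDeriv habs]; exact measure_univ
  have hfin : ∫⁻ v, f v ∂volume ≠ ⊤ := by rw [hint]; exact ENNReal.one_ne_top
  have hae : ∀ᵐ v ∂(volume : Measure (Fin d → ℝ)), f v < ⊤ := Measure.rnDeriv_lt_top μ volume
  have hlim : Tendsto (fun C : ℕ => ∫⁻ v, (f v - min (f v) C) ∂volume) atTop (𝓝 0) := by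
    have := tendsto_lintegral_of_dominated_convergence (μ := (volume : Measure (Fin d → ℝ)))
      (F := fun C v => f v - min (f v) C) (f := fun _ => 0) f
      (fun C => hf.sub (hf.min measurable_const))
      (fun C => Eventually.of_forall fun v => tsub_le_self)
      hfin ?_
    · simpa using this
    · filter_upwards [hae] with v hv
      obtain ⟨C0, hC0⟩ := ENNReal.exists_nat_gt hv.ne
      apply tendsto_atTop_of_eventually_const (i₀ := C0)
      intro C hC
      have : f v ≤ (C : ℝ≥0∞) := le_trans hC0.le (by exact_mod_cast hC)
      simp [min_eq_left this]
  have hε2 : (0:ℝ≥0∞) < ε/2 := ENNReal.half_pos hε.ne'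
  obtain ⟨C, hC⟩ : ∃ C : ℕ, ∫⁻ v, (f v - min (f v) C) ∂volume ≤ ε/2 :=
    (ENNReal.tendsto_nhds_zero.mp hlim (ε/2) hε2).exists
  set b : ℝ≥0∞ := min (ε/2) 1 with hbdef
  have hb0 : b ≠ 0 := (lt_min hε2 zero_lt_one).ne'
  have hbt : b ≠ ⊤ := ne_top_of_le_ne_top ENNReal.one_ne_top (min_le_right _ _)
  have hden0 : ((C:ℝ≥0∞) + 1) ≠ 0 := by simp
  have hdent : ((C:ℝ≥0∞) + 1) ≠ ⊤ := by simp
  have hdiv0 : b / ((C:ℝ≥0∞)+1) ≠ 0 := by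
    simp [ENNReal.div_eq_zero_iff, hb0, hdent]
  have hdivt : b / ((C:ℝ≥0∞)+1) ≠ ⊤ := (ENNReal.div_lt_top hbt hden0).ne
  set s : ℝ := (b / ((C:ℝ≥0∞)+1)).toReal with hsdef
  have hs : 0 < s := ENNReal.toReal_pos hdiv0 hdivt
  refine ⟨(min 1 s)/2, by positivity, fun x => ?_⟩
  have hA := mcube_meas x ((min 1 s)/2)
  rw [← hdens, withDensity_apply _ hA]
  have hsplit : ∫⁻ v in mcube x ((min 1 s)/2), f v ∂volume
      ≤ ∫⁻ v in mcube x ((min 1 s)/2), min (f v) C ∂volume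
        + ∫⁻ v in mcube x ((min 1 s)/2), (f v - min (f v) C) ∂volume := by
    rw [← lintegral_add_left (hf.min measurable_const)]
    exact lintegral_mono fun v => le_add_tsub
  have h1 : ∫⁻ v in mcube x ((min 1 s)/2), min (f v) C ∂volume
      ≤ (C:ℝ≥0∞) * volume (mcube x ((min 1 s)/2)) := by
    calc ∫⁻ v in mcube x ((min 1 s)/2), min (f v) C ∂volume
        ≤ ∫⁻ _ in mcube x ((min 1 s)/2), (C:ℝ≥0∞) ∂volume :=
          lintegral_mono fun v => min_le_right _ _
      _ = (C:ℝ≥0∞) * volume (mcube x ((min 1 s)/2)) := by rw [setLIntegral_const]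
  have h2 : ∫⁻ v in mcube x ((min 1 s)/2), (f v - min (f v) C) ∂volume ≤ ε/2 :=
    le_trans (setLIntegral_le_lintegral _ _) hC
  have hvol : (C:ℝ≥0∞) * volume (mcube x ((min 1 s)/2)) ≤ ε/2 := by
    rw [mcube_volume]
    have h2s : 2 * ((min 1 s)/2) = min 1 s := by ring
    rw [h2s]
    have hle1 : min 1 s ≤ 1 := min_le_left _ _
    have hge0 : 0 ≤ min 1 s := le_min zero_le_one hs.le
    have hpow : (ENNReal.ofReal (min 1 s))^d ≤ ENNReal.ofReal (min 1 s) := by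
      rw [← ENNReal.ofReal_pow hge0]
      exact ENNReal.ofReal_le_ofReal (pow_le_of_le_one hge0 hle1 (by omega))
    have hofs : ENNReal.ofReal (min 1 s) ≤ b / ((C:ℝ≥0∞)+1) := by
      calc ENNReal.ofReal (min 1 s) ≤ ENNReal.ofReal s :=
            ENNReal.ofReal_le_ofReal (min_le_right _ _)
        _ = b / ((C:ℝ≥0∞)+1) := ENNReal.ofReal_toReal hdivt
    calc (C:ℝ≥0∞) * (ENNReal.ofReal (min 1 s))^d
        ≤ ((C:ℝ≥0∞)+1) * (b / ((C:ℝ≥0∞)+1)) :=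
          mul_le_mul le_self_add (le_trans hpow hofs) zero_le zero_le
      _ = b := ENNReal.mul_div_cancel' (fun h => absurd h hden0) (fun h => absurd h hdent)
      _ ≤ ε/2 := min_le_left _ _
  calc ∫⁻ v in mcube x ((min 1 s)/2), f v ∂volume
      ≤ _ + _ := hsplit
    _ ≤ ε/2 + ε/2 := add_le_add (le_trans h1 hvol) h2
    _ = ε := ENNReal.add_halves ε

def ocube (d : ℕ) (M : ℕ) : Set (Fin d → ℝ) :=
  Set.pi Set.univ fun _ => Set.Ioo (-(M:ℝ)) (M:ℝ)

lemma ocube_open (d M : ℕ) : IsOpen (ocube d M) :=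
  isOpen_set_pi Set.finite_univ fun _ _ => isOpen_Ioo

lemma tight_cube {d : ℕ} (μ : Measure (Fin d → ℝ)) [IsProbabilityMeasure μ]
    {η : ℝ≥0∞} (hη : 0 < η) :
    ∃ M : ℕ, μ ((ocube d M)ᶜ) ≤ η := by
  have hmono : Monotone (fun M : ℕ => ocube d M) := by
    intro M N hMN v hv i _
    have h := hv i (Set.mem_univ i)
    simp only [Set.mem_Ioo] at h ⊢
    have hc : (M:ℝ) ≤ N := by exact_mod_cast hMN
    exact ⟨by linarith [h.1], by linarith [h.2]⟩
  have hunion : (⋃ M : ℕ, ocube d M) = Set.univ := by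
    ext v
    simp only [Set.mem_iUnion, Set.mem_univ, iff_true]
    obtain ⟨M, hM⟩ := exists_nat_gt ‖v‖
    refine ⟨M, fun i _ => ?_⟩
    have h1 : |v i| ≤ ‖v‖ := by simpa using norm_le_pi_norm v i
    simp only [Set.mem_Ioo]
    exact abs_lt.mp (lt_of_le_of_lt h1 hM)
  have htend : Tendsto (fun M : ℕ => μ (ocube d M)) atTop (𝓝 (μ Set.univ)) := by
    have := tendsto_measure_iUnion_atTop (μ := μ) hmono
    rwa [hunion] at this
  rw [measure_univ] at htend
  by_cases hη1 : (1:ℝ≥0∞) ≤ η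
  · exact ⟨0, le_trans prob_le_one hη1⟩
  push_neg at hη1
  have h1η : 1 - η < 1 := ENNReal.sub_lt_self ENNReal.one_ne_top one_ne_zero hη.ne'
  obtain ⟨M, hM⟩ := (htend.eventually_const_lt h1η).exists
  refine ⟨M, ?_⟩
  have hcompl : μ ((ocube d M)ᶜ) = 1 - μ (ocube d M) := by
    rw [measure_compl (ocube_open d M).measurableSet (measure_ne_top μ _), measure_univ]
  rw [hcompl, tsub_le_iff_right]
  calc (1:ℝ≥0∞) = (1 - η) + η := (tsub_add_cancel_of_le hη1.le).symm
    _ ≤ μ (ocube d M) + η := add_le_add hM.le le_rfl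
    _ = η + μ (ocube d M) := add_comm _ _

/-- If `ξ_n / a_n` converges in distribution (with `a_n → ∞`) to a random
vector `Z` whose law is absolutely continuous with respect to Lebesgue measure, then
`sup_x P(ξ_n ∈ x + [-L/2, L/2]^d) → 0` for every `L > 0`. -/
theorem diffuseness_of_node_locations
    {d : ℕ} (hd : 1 ≤ d)
    {Ω : Type*} [MeasurableSpace Ω] (P : Measure Ω) [IsProbabilityMeasure P]
    {Ω' : Type*} [MeasurableSpace Ω'] (P' : Measure Ω') [IsProbabilityMeasure P']
    (ξ : ℕ → Ω → (Fin d → ℝ)) (hξ : ∀ n, Measurable (ξ n))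
    (a : ℕ → ℝ) (ha : ∀ n, 0 < a n) (ha' : Tendsto a atTop atTop)
    (Z : Ω' → (Fin d → ℝ)) (hZ : Measurable Z)
    (habs : Measure.map Z P' ≪ volume)
    (hconv : ∀ f : BoundedContinuousFunction (Fin d → ℝ) ℝ,
      Tendsto (fun n => ∫ ω, f ((a n)⁻¹ • ξ n ω) ∂P) atTop (𝓝 (∫ ω', f (Z ω') ∂P'))) :
    ∀ L : ℝ, 0 < L →
      Tendsto (fun n => ⨆ x : Fin d → ℝ, P {ω | ∀ i, |ξ n ω i - x i| ≤ L / 2})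
        atTop (𝓝 0) := by
  classical
  intro L hL
  have hι : ∀ n, Measurable fun ω => (a n)⁻¹ • ξ n ω :=
    fun n => (measurable_const_smul ((a n)⁻¹)).comp (hξ n)
  have hpm : ∀ n, IsProbabilityMeasure (Measure.map (fun ω => (a n)⁻¹ • ξ n ω) P) :=
    fun n => Measure.isProbabilityMeasure_map (hι n).aemeasurable
  haveI : IsProbabilityMeasure (Measure.map Z P') := Measure.isProbabilityMeasure_map hZ.aemeasurable
  let ν : ℕ → ProbabilityMeasure (Fin d → ℝ) :=
    fun n => ⟨Measure.map (fun ω => (a n)⁻¹ • ξ n ω) P, hpm n⟩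
  let νZ : ProbabilityMeasure (Fin d → ℝ) := ⟨Measure.map Z P', inferInstance⟩
  have hT : Tendsto ν atTop (𝓝 νZ) := by
    rw [ProbabilityMeasure.tendsto_iff_forall_integral_tendsto]
    intro f
    have h1 : ∀ n, ∫ v, f v ∂(ν n : Measure (Fin d → ℝ)) = ∫ ω, f ((a n)⁻¹ • ξ n ω) ∂P :=
      fun n => integral_map (hι n).aemeasurable f.continuous.measurable.aestronglyMeasurable
    have h2 : ∫ v, f v ∂(νZ : Measure (Fin d → ℝ)) = ∫ ω', f (Z ω') ∂P' :=
      integral_map hZ.aemeasurable f.continuous.measurable.aestronglyMeasurable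
    rw [h2]
    simp only [h1]
    exact hconv f
  rw [ENNReal.tendsto_nhds_zero]
  intro ε hε
  set ε' : ℝ≥0∞ := min ε 1 with hε'def
  have hε'0 : 0 < ε' := lt_min hε zero_lt_one
  have hε't : ε' ≠ ⊤ := ne_top_of_le_ne_top ENNReal.one_ne_top (min_le_right _ _)
  have hε'ε : ε' ≤ ε := min_le_left _ _
  have hη : (0:ℝ≥0∞) < ε'/2 := ENNReal.half_pos hε'0.ne'
  have hηε' : ε'/2 < ε' := ENNReal.half_lt_self hε'0.ne' hε't
  obtain ⟨δ0, hδ0, hcube⟩ := small_cubes hd (Measure.map Z P') habs hη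
  set δ : ℝ := δ0/2 with hδdef
  have hδ : 0 < δ := by positivity
  obtain ⟨M, hM⟩ := tight_cube (Measure.map Z P') hη
  set K : ℕ := ⌈((M:ℝ) + 2*δ)/δ⌉₊ with hKdef
  set G : Finset (Fin d → ℤ) := Fintype.piFinset fun _ => Finset.Icc (-(K:ℤ)) (K:ℤ) with hGdef
  have hνZcoe : (νZ : Measure (Fin d → ℝ)) = Measure.map Z P' := rfl
  have hνcoe : ∀ n, (ν n : Measure (Fin d → ℝ))
      = Measure.map (fun ω => (a n)⁻¹ • ξ n ω) P := fun n => rfl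
  have hev1 : ∀ᶠ n in atTop, ∀ k ∈ G,
      (ν n : Measure (Fin d → ℝ)) (mcube (fun i => δ * k i) δ0) < ε' := by
    rw [eventually_all_finset]
    intro k _
    refine eventually_lt_of_limsup_lt ?_ (isBoundedUnder_of ⟨⊤, fun _ => le_top⟩)
    calc limsup (fun n => (ν n : Measure (Fin d → ℝ)) (mcube (fun i => δ * k i) δ0)) atTop
        ≤ (νZ : Measure (Fin d → ℝ)) (mcube (fun i => δ * k i) δ0) :=
          ProbabilityMeasure.limsup_measure_closed_le_of_tendsto hT (mcube_closed _ _)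
      _ ≤ ε'/2 := by rw [hνZcoe]; exact hcube _
      _ < ε' := hηε'
  have hev2 : ∀ᶠ n in atTop, (ν n : Measure (Fin d → ℝ)) ((ocube d M)ᶜ) < ε' := by
    refine eventually_lt_of_limsup_lt ?_ (isBoundedUnder_of ⟨⊤, fun _ => le_top⟩)
    calc limsup (fun n => (ν n : Measure (Fin d → ℝ)) ((ocube d M)ᶜ)) atTop
        ≤ (νZ : Measure (Fin d → ℝ)) ((ocube d M)ᶜ) :=
          ProbabilityMeasure.limsup_measure_closed_le_of_tendsto hT
            (ocube_open d M).isClosed_compl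
      _ ≤ ε'/2 := by rw [hνZcoe]; exact hM
      _ < ε' := hηε'
  have hev3 : ∀ᶠ n in atTop, L / (2 * a n) ≤ δ := by
    filter_upwards [ha'.eventually_ge_atTop (L/(2*δ))] with n hn
    have h0 : 0 < a n := ha n
    rw [div_le_iff₀ (by positivity)]
    calc L = 2*δ*(L/(2*δ)) := by field_simp
      _ ≤ 2*δ*(a n) := by
          exact mul_le_mul_of_nonneg_left hn (by positivity)
      _ = δ * (2 * a n) := by ring
  filter_upwards [hev1, hev2, hev3] with n h1 h2 h3
  apply iSup_le
  intro x
  have han : 0 < a n := ha n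
  set y : Fin d → ℝ := (a n)⁻¹ • x with hydef
  set r : ℝ := L / (2 * a n) with hrdef
  have hr0 : 0 < r := by positivity
  have hrδ : r ≤ δ := h3
  have hset : {ω | ∀ i, |ξ n ω i - x i| ≤ L/2}
      = (fun ω => (a n)⁻¹ • ξ n ω) ⁻¹' (mcube y r) := by
    ext ω
    simp only [Set.mem_setOf_eq, Set.mem_preimage, mem_mcube, hydef, Pi.smul_apply,
      smul_eq_mul]
    refine forall_congr' fun i => ?_
    have he : (a n)⁻¹ * ξ n ω i - (a n)⁻¹ * x i = (a n)⁻¹ * (ξ n ω i - x i) := by ring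
    rw [he, abs_mul, abs_of_pos (inv_pos.mpr han), hrdef,
      show L / (2 * a n) = (a n)⁻¹ * (L/2) from (by rw [inv_mul_eq_div, div_div])]
    exact (mul_le_mul_iff_right₀ (inv_pos.mpr han)).symm
  rw [hset, ← Measure.map_apply (hι n) (mcube_meas y r), ← hνcoe n]
  have hsubδ : mcube y r ⊆ mcube y δ := by
    intro w hw
    rw [mem_mcube] at hw ⊢
    exact fun i => le_trans (hw i) hrδ
  by_cases hcase : (mcube y δ ∩ ocube d M).Nonempty
  · obtain ⟨v, hv1, hv2⟩ := hcase
    set k : Fin d → ℤ := fun i => round (y i / δ) with hkdef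
    have hky : ∀ i, |y i - δ * k i| ≤ δ/2 := by
      intro i
      have he : y i - δ * k i = δ * (y i / δ - round (y i / δ)) := by
        field_simp
        rfl
      rw [he, abs_mul, abs_of_pos hδ]
      have h := abs_sub_round (y i / δ)
      nlinarith
    have hyM : ∀ i, |y i| < M + δ := by
      intro i
      have ha1 := (mem_mcube.mp hv1) i
      have ha2 := hv2 i (Set.mem_univ i)
      simp only [Set.mem_Ioo] at ha2
      have hv : |v i| < M := abs_lt.mpr ha2
      have habs : |y i| ≤ |y i - v i| + |v i| := by
        have := abs_add_le (y i - v i) (v i); simpa using this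
      have hcomm : |y i - v i| = |v i - y i| := abs_sub_comm _ _
      linarith
    have hkG : k ∈ G := by
      rw [hGdef, Fintype.mem_piFinset]
      intro i
      rw [Finset.mem_Icc, ← abs_le]
      have hb1 : |δ * k i| ≤ |y i| + δ/2 := by
        have hk := hky i
        have habs : |δ * k i| ≤ |δ * k i - y i| + |y i| := by
          have := abs_add_le (δ * k i - y i) (y i); simpa using this
        have hcomm : |δ * k i - y i| = |y i - δ * k i| := abs_sub_comm _ _
        linarith
    -- |(k i : ℝ)| ≤ (M + 2δ)/δ
      have hb2 : |(k i : ℝ)| ≤ ((M:ℝ) + 2*δ)/δ := by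
        rw [abs_mul, abs_of_pos hδ] at hb1
        rw [le_div_iff₀ hδ]
        have hy := hyM i
        calc |(k i : ℝ)| * δ = δ * |(k i : ℝ)| := by ring
          _ ≤ |y i| + δ/2 := hb1
          _ ≤ (M:ℝ) + 2*δ := by linarith
      have hb3 : |(k i : ℝ)| ≤ (K:ℝ) := le_trans hb2 (Nat.le_ceil _)
      exact_mod_cast hb3
    have hsub : mcube y r ⊆ mcube (fun i => δ * k i) δ0 := by
      intro w hw
      rw [mem_mcube] at hw ⊢
      intro i
      have hw1 := hw i
      have hk1 := hky i
      have habs : |w i - δ * k i| ≤ |w i - y i| + |y i - δ * k i| := abs_sub_le _ _ _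
      have hδd : δ = δ0/2 := rfl
      linarith
    calc (ν n : Measure (Fin d → ℝ)) (mcube y r)
        ≤ (ν n : Measure (Fin d → ℝ)) (mcube (fun i => δ * k i) δ0) := measure_mono hsub
      _ ≤ ε' := (h1 k hkG).le
      _ ≤ ε := hε'ε
  · have hsub : mcube y r ⊆ (ocube d M)ᶜ := by
      intro w hw hwo
      exact hcase ⟨w, hsubδ hw, hwo⟩
    calc (ν n : Measure (Fin d → ℝ)) (mcube y r)
        ≤ (ν n : Measure (Fin d → ℝ)) ((ocube d M)ᶜ) := measure_mono hsub
      _ ≤ ε' := h2.le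
      _ ≤ ε := hε'ε
end

section
/- Let S ⊆ ℝ, t ∈ ℝ, δ > 0 and M > 0. Then: (i) I_{δ,M}(t,S) ≤ I(t,S); and (ii) if a ≤ t ≤ b are real numbers with [a,b] ⊆ S, then I_{δ,M}(t,S) ≥ min(b − a, M) − 2δ. In particular, if t ∈ S then I_{δ,M}(t,S) ≥ min(I(t,S), M) − 2δ. -/
open MeasureTheory Filter Topology
open scoped ENNReal NNReal

/-- The connection-interval length `I(t,S)`: the supremum of `b - a` over all intervals
`[a,b] ⊆ S` with `a ≤ b` and `t ∈ [a,b]` (and `0` if `t ∉ S`, since then no such interval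
exists). -/
noncomputable def connInterval (t : ℝ) (S : Set ℝ) : ℝ≥0∞ :=
  ⨆ (a : ℝ) (b : ℝ) (_ : a ≤ b) (_ : t ∈ Set.Icc a b) (_ : Set.Icc a b ⊆ S),
    ENNReal.ofReal (b - a)

/-- The discretized interval length `I_{δ,M}(t,S)`: the supremum of `b - a` over pairs
`a = t + jδ`, `b = t + kδ` with `j, k ∈ ℤ`, `|j|, |k| ≤ ⌈M/δ⌉`, `a ≤ t ≤ b` and
`[a,b] ⊆ S` (value `0` if no such pair exists). -/
noncomputable def connIntervalDisc (δ M t : ℝ) (S : Set ℝ) : ℝ≥0∞ :=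
  ⨆ (j : ℤ) (k : ℤ) (_ : |j| ≤ ⌈M / δ⌉) (_ : |k| ≤ ⌈M / δ⌉)
    (_ : t + (j : ℝ) * δ ≤ t) (_ : t ≤ t + (k : ℝ) * δ)
    (_ : Set.Icc (t + (j : ℝ) * δ) (t + (k : ℝ) * δ) ⊆ S),
    ENNReal.ofReal ((t + (k : ℝ) * δ) - (t + (j : ℝ) * δ))

lemma aux_key (S : Set ℝ) (t δ M : ℝ) (hδ : 0 < δ) (hM : 0 < M)
    (a b : ℝ) (hat : a ≤ t) (htb : t ≤ b) (hsub : Set.Icc a b ⊆ S) :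
    ENNReal.ofReal (min (b - a) M - 2 * δ) ≤ connIntervalDisc δ M t S := by
  set N : ℤ := ⌈M / δ⌉ with hN
  have hN0 : 0 < N := Int.ceil_pos.mpr (div_pos hM hδ)
  have hNM : M ≤ (N : ℝ) * δ := by
    have h := Int.le_ceil (M / δ)
    rw [div_le_iff₀ hδ] at h
    exact h
  set fj : ℤ := ⌊(t - a) / δ⌋ with hfj
  set fk : ℤ := ⌊(b - t) / δ⌋ with hfk
  have hfj0 : 0 ≤ fj := Int.floor_nonneg.mpr (div_nonneg (by linarith) hδ.le)
  have hfk0 : 0 ≤ fk := Int.floor_nonneg.mpr (div_nonneg (by linarith) hδ.le)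
  have hfj1 : (fj : ℝ) * δ ≤ t - a := by
    have h := Int.floor_le ((t - a) / δ)
    have := mul_le_mul_of_nonneg_right h hδ.le
    rwa [div_mul_cancel₀ _ hδ.ne'] at this
  have hfk1 : (fk : ℝ) * δ ≤ b - t := by
    have h := Int.floor_le ((b - t) / δ)
    have := mul_le_mul_of_nonneg_right h hδ.le
    rwa [div_mul_cancel₀ _ hδ.ne'] at this
  have hfj2 : t - a - δ < (fj : ℝ) * δ := by
    have h := Int.sub_one_lt_floor ((t - a) / δ)
    have := mul_lt_mul_of_pos_right h hδ
    rw [sub_mul, div_mul_cancel₀ _ hδ.ne', one_mul] at this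
    linarith
  have hfk2 : b - t - δ < (fk : ℝ) * δ := by
    have h := Int.sub_one_lt_floor ((b - t) / δ)
    have := mul_lt_mul_of_pos_right h hδ
    rw [sub_mul, div_mul_cancel₀ _ hδ.ne', one_mul] at this
    linarith
  set j : ℤ := -(min fj N) with hj
  set k : ℤ := min fk N with hk
  have hjabs : |j| ≤ N := by
    rw [hj, abs_neg, abs_of_nonneg (le_min hfj0 hN0.le)]
    exact min_le_right _ _
  have hkabs : |k| ≤ N := by
    rw [hk, abs_of_nonneg (le_min hfk0 hN0.le)]
    exact min_le_right _ _
  have hjcast : (j : ℝ) = -(min fj N : ℤ) := by rw [hj]; push_cast; ring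
  have hminj0 : (0 : ℝ) ≤ ((min fj N : ℤ) : ℝ) := by exact_mod_cast le_min hfj0 hN0.le
  have hmink0 : (0 : ℝ) ≤ ((min fk N : ℤ) : ℝ) := by exact_mod_cast le_min hfk0 hN0.le
  have hjle : t + (j : ℝ) * δ ≤ t := by nlinarith [hjcast]
  have hkle : t ≤ t + (k : ℝ) * δ := by
    have : (k : ℝ) = ((min fk N : ℤ) : ℝ) := by rw [hk]
    nlinarith
  have haj : a ≤ t + (j : ℝ) * δ := by
    have h1 : ((min fj N : ℤ) : ℝ) ≤ (fj : ℝ) := by exact_mod_cast min_le_left fj N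
    have h2 : ((min fj N : ℤ) : ℝ) * δ ≤ t - a :=
      le_trans (mul_le_mul_of_nonneg_right h1 hδ.le) hfj1
    rw [hjcast]; linarith
  have hkb : t + (k : ℝ) * δ ≤ b := by
    have h1 : ((min fk N : ℤ) : ℝ) ≤ (fk : ℝ) := by exact_mod_cast min_le_left fk N
    have h2 : ((min fk N : ℤ) : ℝ) * δ ≤ b - t :=
      le_trans (mul_le_mul_of_nonneg_right h1 hδ.le) hfk1
    rw [hk]; linarith
  have hsub' : Set.Icc (t + (j : ℝ) * δ) (t + (k : ℝ) * δ) ⊆ S :=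
    subset_trans (Set.Icc_subset_Icc haj hkb) hsub
  -- length bound
  have hk' : min (b - t) M - δ ≤ ((min fk N : ℤ) : ℝ) * δ := by
    rcases min_cases fk N with ⟨h1, h2⟩ | ⟨h1, h2⟩
    · rw [h1]
      have := min_le_left (b - t) M
      linarith
    · rw [h1]
      have := min_le_right (b - t) M
      linarith
  have hj' : min (t - a) M - δ ≤ ((min fj N : ℤ) : ℝ) * δ := by
    rcases min_cases fj N with ⟨h1, h2⟩ | ⟨h1, h2⟩
    · rw [h1]
      have := min_le_left (t - a) M
      linarith
    · rw [h1]
      have := min_le_right (t - a) M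
      linarith
  have hminsum : min (b - a) M ≤ min (b - t) M + min (t - a) M := by
    rcases le_total (b - t) M with h | h <;> rcases le_total (t - a) M with h' | h'
    · rw [min_eq_left h, min_eq_left h']
      have := min_le_left (b - a) M; linarith
    · rw [min_eq_left h, min_eq_right h']
      have := min_le_right (b - a) M; linarith
    · rw [min_eq_right h, min_eq_left h']
      have := min_le_right (b - a) M; linarith
    · rw [min_eq_right h, min_eq_right h']
      have := min_le_right (b - a) M; linarith
  have hlen : min (b - a) M - 2 * δ ≤ (t + (k : ℝ) * δ) - (t + (j : ℝ) * δ) := by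
    have hkr : (k : ℝ) = ((min fk N : ℤ) : ℝ) := by rw [hk]
    rw [hjcast, hkr]
    linarith
  calc ENNReal.ofReal (min (b - a) M - 2 * δ)
      ≤ ENNReal.ofReal ((t + (k : ℝ) * δ) - (t + (j : ℝ) * δ)) :=
        ENNReal.ofReal_le_ofReal hlen
    _ ≤ connIntervalDisc δ M t S := by
        rw [connIntervalDisc]
        refine le_iSup_of_le j (le_iSup_of_le k ?_)
        rw [← hN, iSup_pos hjabs, iSup_pos hkabs, iSup_pos hjle, iSup_pos hkle, iSup_pos hsub']

/-- (i) `I_{δ,M}(t,S) ≤ I(t,S)`; (ii) if `a ≤ t ≤ b` and `[a,b] ⊆ S` then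
`I_{δ,M}(t,S) ≥ min(b - a, M) - 2δ`; in particular, if `t ∈ S` then
`I_{δ,M}(t,S) ≥ min(I(t,S), M) - 2δ`. -/
theorem discretized_interval_length_bounds
    (S : Set ℝ) (t δ M : ℝ) (hδ : 0 < δ) (hM : 0 < M) :
    connIntervalDisc δ M t S ≤ connInterval t S ∧
    (∀ a b : ℝ, a ≤ t → t ≤ b → Set.Icc a b ⊆ S →
      ENNReal.ofReal (min (b - a) M - 2 * δ) ≤ connIntervalDisc δ M t S) ∧
    (t ∈ S →
      min (connInterval t S) (ENNReal.ofReal M) - ENNReal.ofReal (2 * δ)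
        ≤ connIntervalDisc δ M t S) := by
  refine ⟨?_, fun a b hat htb hsub => aux_key S t δ M hδ hM a b hat htb hsub, ?_⟩
  · rw [connIntervalDisc]
    refine iSup_le fun j => iSup_le fun k => iSup_le fun _ => iSup_le fun _ =>
      iSup_le fun hjt => iSup_le fun htk => iSup_le fun hsub => ?_
    rw [connInterval]
    refine le_iSup_of_le (t + (j : ℝ) * δ) (le_iSup_of_le (t + (k : ℝ) * δ) ?_)
    rw [iSup_pos (hjt.trans htk), iSup_pos (Set.mem_Icc.mpr ⟨hjt, htk⟩), iSup_pos hsub]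
  · intro _
    rw [tsub_le_iff_right]
    rw [connInterval]
    rw [min_comm]
    simp only [inf_iSup_eq]
    refine iSup_le fun a => iSup_le fun b => iSup_le fun hab => iSup_le fun hmem =>
      iSup_le fun hsub => ?_
    have hmem' := Set.mem_Icc.mp hmem
    have h2 : ENNReal.ofReal (min (b - a) M - 2 * δ) ≤ connIntervalDisc δ M t S :=
      aux_key S t δ M hδ hM a b hmem'.1 hmem'.2 hsub
    have hmono : Monotone ENNReal.ofReal := fun x y h => ENNReal.ofReal_le_ofReal h
    have h3 : min (ENNReal.ofReal M) (ENNReal.ofReal (b - a))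
        = ENNReal.ofReal (min (b - a) M) := by
      rw [min_comm, hmono.map_min]
    rw [h3]
    calc ENNReal.ofReal (min (b - a) M)
        = ENNReal.ofReal ((min (b - a) M - 2 * δ) + 2 * δ) := by ring_nf
      _ ≤ ENNReal.ofReal (min (b - a) M - 2 * δ) + ENNReal.ofReal (2 * δ) :=
          ENNReal.ofReal_add_le
      _ ≤ connIntervalDisc δ M t S + ENNReal.ofReal (2 * δ) := add_le_add_left h2 _
end
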